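/- Let T be a finite tree with n ≥ 3 leaves in which each internal vertex has degree at least 3, and let b be the number of connected components of the subgraph induced on hidden vertices. Then b ≤ (n−3)/3, and this bound is attained: for every n ≥ 6 there exists such a tree with b = ⌊(n−3)/3⌋. -/

import Mathlib

/-- The degree of a vertex, as the number of its neighbors. -/
noncomputable def degC {V : Type*} (G : SimpleGraph V) (v : V) : ℕ :=
  {w | G.Adj v w}.ncard

/-- A hidden vertex: an internal (non-leaf) vertex none of whose neighbors
is a leaf. -/
def IsHidden {V : Type*} (G : SimpleGraph V) (v : V) : Prop :=
  degC G v ≠ 1 ∧ ∀ w : V, G.Adj v w → degC G w ≠ 1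

open Finset SimpleGraph

variable {V : Type*} {G : SimpleGraph V}

lemma degC_eq_degree [Fintype V] [DecidableRel G.Adj] (v : V) :
    degC G v = G.degree v := by
  rw [degC, SimpleGraph.degree, SimpleGraph.neighborFinset,
    Set.ncard_eq_toFinset_card']
  rfl

/-- walks stay in adjacency-closed sets -/
lemma walk_mem_closed {S : Set V} (hS : ∀ ⦃a b⦄, a ∈ S → G.Adj a b → b ∈ S)
    {u v : V} (p : G.Walk u v) (hu : u ∈ S) : v ∈ S := by
  induction p with
  | nil => exact hu
  | cons h q ih => exact ih (hS hu h)

/-- walks lift into induced subgraphs on adjacency-closed sets -/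
lemma walk_induce_closed {S : Set V} (hS : ∀ ⦃a b⦄, a ∈ S → G.Adj a b → b ∈ S)
    {u v : V} (p : G.Walk u v) (hu : u ∈ S) :
    ∃ hv : v ∈ S, Nonempty ((G.induce S).Walk ⟨u, hu⟩ ⟨v, hv⟩) := by
  induction p with
  | nil => exact ⟨hu, ⟨SimpleGraph.Walk.nil⟩⟩
  | @cons a b c h q ih =>
      obtain ⟨hv, ⟨w⟩⟩ := ih (hS hu h)
      exact ⟨hv, ⟨SimpleGraph.Walk.cons (by exact h) w⟩⟩

lemma induce_acyclic (hG : G.IsAcyclic) (S : Set V) : (G.induce S).IsAcyclic := by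
  intro v c hc
  have f := SimpleGraph.Embedding.induce (G := G) S
  exact hG (c.map f.toHom) (hc.map f.injective)

lemma supp_closed (c : G.ConnectedComponent) :
    ∀ ⦃a b⦄, a ∈ c.supp → G.Adj a b → b ∈ c.supp := by
  intro a b ha h
  rw [ConnectedComponent.mem_supp_iff] at ha ⊢
  rw [← ha]
  exact ConnectedComponent.sound h.symm.reachable

lemma induce_supp_connected (c : G.ConnectedComponent) :
    (G.induce c.supp).Connected := by
  have hne : Nonempty ↑c.supp := by
    obtain ⟨v, hv⟩ := c.exists_rep
    exact ⟨⟨v, by rw [ConnectedComponent.mem_supp_iff]; exact hv⟩⟩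
  haveI := hne
  refine Connected.mk fun x y => ?_
  · obtain ⟨x, hx⟩ := x
    obtain ⟨y, hy⟩ := y
    rw [ConnectedComponent.mem_supp_iff] at hx hy
    have : G.Reachable x y := ConnectedComponent.exact (hx.trans hy.symm)
    obtain ⟨p⟩ := this
    obtain ⟨hy', ⟨w⟩⟩ := walk_induce_closed (supp_closed c) p
      (by rw [ConnectedComponent.mem_supp_iff]; exact hx)
    exact w.reachable

lemma degC_induce_supp [Fintype V] (c : G.ConnectedComponent) (x : c.supp) :
    degC (G.induce c.supp) x = degC G x.val := by
  rw [degC, degC]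
  have himg : Subtype.val '' {w : c.supp | (G.induce c.supp).Adj x w}
      = {w : V | G.Adj x.val w} := by
    ext w
    constructor
    · rintro ⟨⟨w, hw⟩, hadj, rfl⟩
      exact hadj
    · intro hadj
      exact ⟨⟨w, supp_closed c x.2 hadj⟩, hadj, rfl⟩
  rw [← himg, Set.ncard_image_of_injective _ Subtype.val_injective]

lemma forest_sum {W : Type*} [Fintype W] {F : SimpleGraph W} (hF : F.IsAcyclic) :
    ∑ x, degC F x + 2 * Nat.card F.ConnectedComponent = 2 * Fintype.card W := by
  classical
  haveI : Fintype F.ConnectedComponent := Fintype.ofFinite _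
  rw [Nat.card_eq_fintype_card]
  have hsum : ∑ x, degC F x
      = ∑ c : F.ConnectedComponent,
          ∑ x ∈ Finset.univ.filter (fun x => F.connectedComponentMk x = c), degC F x := by
    exact (Finset.sum_fiberwise _ _ _).symm
  have hcard : Fintype.card W
      = ∑ c : F.ConnectedComponent,
          (Finset.univ.filter (fun x => F.connectedComponentMk x = c)).card := by
    rw [← Finset.card_univ, Finset.card_eq_sum_card_fiberwise (f := F.connectedComponentMk)]
    intro x _; exact Finset.mem_univ _
  have key : ∀ c : F.ConnectedComponent,
      ∑ x ∈ Finset.univ.filter (fun x => F.connectedComponentMk x = c), degC F x + 2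
        = 2 * (Finset.univ.filter (fun x => F.connectedComponentMk x = c)).card := by
    intro c
    haveI : Fintype ↑c.supp := Fintype.ofFinite _
    have hT : (F.induce c.supp).IsTree := ⟨induce_supp_connected c, induce_acyclic hF _⟩
    haveI : DecidableRel (F.induce c.supp).Adj := Classical.decRel _
    have h1 := hT.card_edgeFinset
    have h2 := SimpleGraph.sum_degrees_eq_twice_card_edges (F.induce c.supp)
    have h3 : ∑ x ∈ Finset.univ.filter (fun x => F.connectedComponentMk x = c), degC F x
        = ∑ x : ↑c.supp, degC (F.induce c.supp) x := by
      have hiff : ∀ x, x ∈ Finset.univ.filter (fun x => F.connectedComponentMk x = c)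
          ↔ x ∈ c.supp := by
        intro x; simp [ConnectedComponent.mem_supp_iff]
      calc ∑ x ∈ Finset.univ.filter (fun x => F.connectedComponentMk x = c), degC F x
          = ∑ x : ↑c.supp, degC F x.val := Finset.sum_subtype _ hiff _
        _ = ∑ x : ↑c.supp, degC (F.induce c.supp) x :=
            Finset.sum_congr rfl (fun x _ => (degC_induce_supp c x).symm)
    have h4 : (Finset.univ.filter (fun x => F.connectedComponentMk x = c)).card
        = Fintype.card ↑c.supp := by
      have he : (Finset.univ.filter (fun x => F.connectedComponentMk x = c))
          = Set.toFinset c.supp := by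
        ext x; simp [ConnectedComponent.mem_supp_iff]
      rw [he, Set.toFinset_card]
    have h5 : ∑ x : ↑c.supp, degC (F.induce c.supp) x
        = ∑ x : ↑c.supp, (F.induce c.supp).degree x :=
      Finset.sum_congr rfl (fun x _ => degC_eq_degree x)
    rw [h3, h4, h5, h2]
    omega
  calc ∑ x, degC F x + 2 * Fintype.card F.ConnectedComponent
      = ∑ c : F.ConnectedComponent,
          (∑ x ∈ Finset.univ.filter (fun x => F.connectedComponentMk x = c), degC F x + 2) := by
        rw [Finset.sum_add_distrib, ← hsum]; simp [mul_comm]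
    _ = ∑ c : F.ConnectedComponent,
          2 * (Finset.univ.filter (fun x => F.connectedComponentMk x = c)).card := by
        exact Finset.sum_congr rfl (fun c _ => key c)
    _ = 2 * Fintype.card W := by rw [← Finset.mul_sum, ← hcard]

lemma degC_induce (S : Set V) (x : ↥S) :
    degC (G.induce S) x = (S ∩ {w | G.Adj x.val w}).ncard := by
  rw [degC]
  have himg : Subtype.val '' {w : ↥S | (G.induce S).Adj x w}
      = S ∩ {w : V | G.Adj x.val w} := by
    ext w
    constructor
    · rintro ⟨⟨w, hw⟩, hadj, rfl⟩
      exact ⟨hw, hadj⟩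
    · rintro ⟨hw, hadj⟩
      exact ⟨⟨w, hw⟩, hadj, rfl⟩
  rw [← himg, Set.ncard_image_of_injective _ Subtype.val_injective]

lemma sum_adj_comm [Fintype V] [DecidableRel G.Adj] (X Y : Finset V) :
    ∑ v ∈ X, (Y.filter (G.Adj v ·)).card = ∑ w ∈ Y, (X.filter (G.Adj w ·)).card := by
  classical
  simp only [Finset.card_filter]
  rw [Finset.sum_comm]
  refine Finset.sum_congr rfl fun w _ => Finset.sum_congr rfl fun v _ => ?_
  simp [SimpleGraph.adj_comm]

theorem part1 {V : Type} [Fintype V] (G : SimpleGraph V) (hT : G.IsTree)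
    (hdeg : ∀ v, degC G v = 1 ∨ 3 ≤ degC G v) (n : ℕ) (hn : 3 ≤ n)
    (hleaf : {v : V | degC G v = 1}.ncard = n) :
    3 * Nat.card ((G.induce {v : V | IsHidden G v}).ConnectedComponent) + 3 ≤ n := by
  classical
  set S : Set V := {v : V | IsHidden G v} with hS
  set b : ℕ := Nat.card ((G.induce S).ConnectedComponent) with hb
  set L : Finset V := Finset.univ.filter (fun v => degC G v = 1) with hL
  set H : Finset V := Finset.univ.filter (fun v => IsHidden G v) with hH
  set E : Finset V := Finset.univ \ (L ∪ H) with hE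
  set d : V → Finset V → ℕ := fun v Y => (Y.filter (G.Adj v ·)).card with hd
  -- neighbor of a leaf is unique
  have hsingle : ∀ v, degC G v = 1 → ∃ w0, G.Adj v w0 ∧ ∀ w, G.Adj v w → w = w0 := by
    intro v hv
    obtain ⟨w0, hw0⟩ := Set.ncard_eq_one.mp hv
    refine ⟨w0, ?_, ?_⟩
    · have : w0 ∈ {w | G.Adj v w} := by rw [hw0]; rfl
      exact this
    · intro w hw
      have : w ∈ {w | G.Adj v w} := hw
      rw [hw0] at this
      exact this
  -- no two adjacent leaves
  have hnoLL : ∀ v w, degC G v = 1 → degC G w = 1 → ¬ G.Adj v w := by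
    intro v w hv hw hadj
    obtain ⟨v0, hv0, hv0u⟩ := hsingle v hv
    obtain ⟨w0, hw0, hw0u⟩ := hsingle w hw
    have hv0w : v0 = w := (hv0u w hadj).symm ▸ rfl
    have hw0v : w0 = v := by
      have := hw0u v hadj.symm
      exact this.symm ▸ rfl
    have hall0 : ∀ x y, G.Walk x y → y = v ∨ y = w → x = v ∨ x = w := by
      intro x y q
      induction q with
      | nil => exact id
      | @cons a c y' h q ih =>
          intro hy
          rcases ih hy with rfl | rfl
          · right
            have := hv0u a h.symm
            rw [this, hv0w]
          · left
            have := hw0u a h.symm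
            rw [this, hw0v]
    have hall : ∀ x, x = v ∨ x = w := by
      intro x
      obtain ⟨q⟩ := hT.isConnected.preconnected x v
      exact hall0 x v q (Or.inl rfl)
    have hsub : {u : V | degC G u = 1} ⊆ {v, w} := fun x _ => hall x
    have : n ≤ 2 := by
      rw [← hleaf]
      calc {u : V | degC G u = 1}.ncard ≤ ({v, w} : Set V).ncard :=
            Set.ncard_le_ncard hsub (Set.toFinite _)
        _ ≤ 2 := by
            refine le_trans (Set.ncard_insert_le _ _) ?_
            simp
    omega
  -- leaf structure
  have hleafd : ∀ v ∈ L, d v L = 0 ∧ d v H = 0 ∧ d v E = 1 := by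
    intro v hv
    rw [hL, Finset.mem_filter] at hv
    obtain ⟨w0, hw0, hw0u⟩ := hsingle v hv.2
    have hw0L : w0 ∉ L := by
      rw [hL, Finset.mem_filter]
      rintro ⟨-, h1⟩
      exact hnoLL v w0 hv.2 h1 hw0
    have hw0H : w0 ∉ H := by
      rw [hH, Finset.mem_filter]
      rintro ⟨-, h1⟩
      exact h1.2 v hw0.symm hv.2
    refine ⟨?_, ?_, ?_⟩
    · rw [hd]
      simp only [Finset.card_eq_zero, Finset.filter_eq_empty_iff]
      intro w hw hadj
      exact hw0L (hw0u w hadj ▸ hw)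
    · rw [hd]
      simp only [Finset.card_eq_zero, Finset.filter_eq_empty_iff]
      intro w hw hadj
      exact hw0H (hw0u w hadj ▸ hw)
    · have : E.filter (G.Adj v ·) = {w0} := by
        ext w
        simp only [Finset.mem_filter, Finset.mem_singleton]
        constructor
        · rintro ⟨-, hadj⟩
          exact hw0u w hadj
        · rintro rfl
          refine ⟨?_, hw0⟩
          rw [hE]
          simp only [Finset.mem_sdiff, Finset.mem_univ, Finset.mem_union, true_and]
          tauto
      rw [hd]; simp only; rw [this, Finset.card_singleton]
  -- partition facts
  have hdisjLH : Disjoint L H := by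
    rw [Finset.disjoint_left]
    intro v hvL hvH
    exact (Finset.mem_filter.mp hvH).2.1 (Finset.mem_filter.mp hvL).2
  have hdisjE : Disjoint (L ∪ H) E := by
    rw [Finset.disjoint_left]
    intro v hv hvE
    rw [hE, Finset.mem_sdiff] at hvE
    exact hvE.2 hv
  have huniv : (L ∪ H) ∪ E = Finset.univ := by
    rw [hE]
    ext v
    simp only [Finset.mem_union, Finset.mem_sdiff, Finset.mem_univ, iff_true, true_and]
    tauto
  have hfilter_univ : ∀ v, degC G v = (Finset.univ.filter (G.Adj v ·)).card := by
    intro v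
    rw [degC, Set.ncard_eq_toFinset_card']
    congr 1
    ext w
    simp
  have hdecomp : ∀ v, degC G v = d v L + d v H + d v E := by
    intro v
    have hd2 := Finset.disjoint_filter_filter (p := (G.Adj v ·)) (q := (G.Adj v ·)) hdisjLH
    have hd1 : Disjoint (L.filter (G.Adj v ·) ∪ H.filter (G.Adj v ·)) (E.filter (G.Adj v ·)) := by
      have := Finset.disjoint_filter_filter (p := (G.Adj v ·)) (q := (G.Adj v ·)) hdisjE
      rwa [Finset.filter_union] at this
    rw [hfilter_univ v, ← huniv, Finset.filter_union, Finset.filter_union,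
      Finset.card_union_of_disjoint hd1, Finset.card_union_of_disjoint hd2]
  have hLcard : L.card = n := by
    rw [← hleaf, Set.ncard_eq_toFinset_card']
    congr 1
    ext v
    simp [hL]
  have hcardV : Fintype.card V = L.card + H.card + E.card := by
    rw [← Finset.card_univ, ← huniv, Finset.card_union_of_disjoint hdisjE,
      Finset.card_union_of_disjoint hdisjLH]
  -- handshake and tree edge count
  have hhandshake : ∑ v, degC G v + 2 = 2 * Fintype.card V := by
    have h1 := hT.card_edgeFinset
    have h2 := G.sum_degrees_eq_twice_card_edges
    have h3 : ∑ v, degC G v = ∑ v, G.degree v :=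
      Finset.sum_congr rfl fun v _ => degC_eq_degree v
    omega
  have hHL : ∀ v ∈ H, d v L = 0 := by
    intro v hv
    rw [hH, Finset.mem_filter] at hv
    simp only [hd, Finset.card_eq_zero, Finset.filter_eq_empty_iff]
    intro w hw hadj
    exact hv.2.2 w hadj (Finset.mem_filter.mp hw).2
  have hHdeg : ∀ v ∈ H, 3 ≤ degC G v := by
    intro v hv
    rw [hH, Finset.mem_filter] at hv
    rcases hdeg v with h | h
    · exact absurd h hv.2.1
    · exact h
  have hEdeg : ∀ v ∈ E, 3 ≤ degC G v := by
    intro v hv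
    rw [hE, Finset.mem_sdiff, Finset.mem_union] at hv
    rcases hdeg v with h | h
    · exact absurd (Finset.mem_filter.mpr ⟨Finset.mem_univ v, h⟩) (fun hh => hv.2 (Or.inl hh))
    · exact h
  -- forest count on hidden set
  haveI : Fintype ↥S := Fintype.ofFinite _
  have hStoF : S.toFinset = H := by
    ext v
    simp [hH, hS]
  have hforest : ∑ v ∈ H, d v H + 2 * b = 2 * H.card := by
    have hf := forest_sum (F := G.induce S) (induce_acyclic hT.IsAcyclic S)
    have e1 : ∑ x : ↥S, degC (G.induce S) x = ∑ v ∈ H, d v H := by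
      have e2 : ∀ x : ↥S, degC (G.induce S) x = d x.val H := by
        intro x
        rw [degC_induce]
        have e3 : S ∩ {w | G.Adj x.val w} = ↑(H.filter (G.Adj x.val ·)) := by
          ext w
          simp only [Set.mem_inter_iff, Set.mem_setOf_eq, Finset.coe_filter, hH, hS,
            Finset.mem_filter, Finset.mem_univ, true_and]
        rw [e3, Set.ncard_coe_finset]
      rw [Finset.sum_congr rfl (fun x _ => e2 x)]
      exact (Finset.sum_subtype H (fun x => by simp [hH, hS]) (fun v => d v H)).symm
    have e4 : Fintype.card ↥S = H.card := by rw [← hStoF, Set.toFinset_card]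
    rw [← e1, ← e4]
    exact hf
  have hble : b ≤ H.card := by
    have h1 : b ≤ Nat.card ↥S :=
      Nat.card_le_card_of_surjective (SimpleGraph.connectedComponentMk _)
        Quot.mk_surjective
    have h2 : Nat.card ↥S = H.card := by
      rw [Nat.card_eq_fintype_card, ← hStoF, Set.toFinset_card]
    omega
  -- sum splits
  have hsplit : ∑ v, degC G v
      = ∑ v ∈ L, degC G v + ∑ v ∈ H, degC G v + ∑ v ∈ E, degC G v := by
    rw [← huniv, Finset.sum_union hdisjE, Finset.sum_union hdisjLH]
  have hLsum : ∑ v ∈ L, degC G v = n := by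
    rw [← hLcard, Finset.card_eq_sum_ones]
    exact Finset.sum_congr rfl fun v hv => (Finset.mem_filter.mp hv).2
  have hLE : ∑ v ∈ L, d v E = n := by
    rw [← hLcard, Finset.card_eq_sum_ones]
    exact Finset.sum_congr rfl fun v hv => (hleafd v hv).2.2
  have hHsum : ∑ v ∈ H, degC G v = ∑ v ∈ H, d v H + ∑ v ∈ H, d v E := by
    rw [Finset.sum_congr rfl (fun v hv => hdecomp v), Finset.sum_add_distrib,
      Finset.sum_add_distrib]
    rw [Finset.sum_congr rfl hHL]
    simp
  have hcomm : ∀ X Y : Finset V, ∑ v ∈ X, d v Y = ∑ w ∈ Y, d w X := by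
    intro X Y
    simp only [hd]
    exact sum_adj_comm X Y
  have hEL : ∑ v ∈ E, d v L = n := (hcomm E L).trans hLE
  have hEH : ∑ v ∈ E, d v H = ∑ v ∈ H, d v E := hcomm E H
  have hEsum : ∑ v ∈ E, degC G v
      = n + ∑ v ∈ H, d v E + ∑ v ∈ E, d v E := by
    rw [Finset.sum_congr rfl (fun v hv => hdecomp v), Finset.sum_add_distrib,
      Finset.sum_add_distrib, hEL, hEH]
  have hHbound : 3 * H.card ≤ ∑ v ∈ H, degC G v := by
    calc 3 * H.card = H.card • 3 := by rw [smul_eq_mul, mul_comm]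
      _ ≤ ∑ v ∈ H, degC G v := Finset.card_nsmul_le_sum H _ 3 hHdeg
  have hEbound : 3 * E.card ≤ ∑ v ∈ E, degC G v := by
    calc 3 * E.card = E.card • 3 := by rw [smul_eq_mul, mul_comm]
      _ ≤ ∑ v ∈ E, degC G v := Finset.card_nsmul_le_sum E _ 3 hEdeg
  omega
section ParentTree

variable {N : ℕ} (p : Fin N → Fin N)

def pgraph : SimpleGraph (Fin N) :=
  SimpleGraph.fromRel (fun u v => v = p u ∧ u.val ≠ 0)

lemma pgraph_adj {u v : Fin N} : (pgraph p).Adj u v ↔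
    u ≠ v ∧ ((v = p u ∧ u.val ≠ 0) ∨ (u = p v ∧ v.val ≠ 0)) := by
  simp [pgraph, SimpleGraph.fromRel_adj]

variable (hp : ∀ v : Fin N, v.val ≠ 0 → (p v).val < v.val)

include hp

lemma pgraph_adj_parent {v : Fin N} (hv : v.val ≠ 0) : (pgraph p).Adj v (p v) := by
  rw [pgraph_adj]
  refine ⟨?_, Or.inl ⟨rfl, hv⟩⟩
  intro he
  have := hp v hv
  rw [← he] at this
  omega

lemma pgraph_connected (hN : 0 < N) : (pgraph p).Connected := by
  have key : ∀ k (v : Fin N), v.val ≤ k → (pgraph p).Reachable v ⟨0, hN⟩ := by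
    intro k
    induction k with
    | zero =>
        intro v hv
        have : v = ⟨0, hN⟩ := Fin.ext (by simpa using hv)
        rw [this]
    | succ k ih =>
        intro v hv
        by_cases h0 : v.val = 0
        · have : v = ⟨0, hN⟩ := Fin.ext (by simpa using h0)
          rw [this]
        · exact ((pgraph_adj_parent p hp h0).reachable).trans
            (ih (p v) (by have := hp v h0; omega))
  haveI : Nonempty (Fin N) := ⟨⟨0, hN⟩⟩
  exact Connected.mk fun u v => (key _ u le_rfl).trans (key _ v le_rfl).symm

lemma pgraph_iter_le (hroot : ∀ v : Fin N, v.val = 0 → p v = v) :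
    ∀ k (v : Fin N), (p^[k] v).val ≤ v.val := by
  intro k
  induction k with
  | zero => intro v; simp
  | succ k ih =>
      intro v
      rw [Function.iterate_succ_apply]
      refine le_trans (ih (p v)) ?_
      by_cases h0 : v.val = 0
      · rw [hroot v h0]
      · exact le_of_lt (hp v h0)

lemma pgraph_acyclic (hroot : ∀ v : Fin N, v.val = 0 → p v = v) :
    (pgraph p).IsAcyclic := by
  rw [isAcyclic_iff_forall_adj_isBridge]
  have key : ∀ u : Fin N, u.val ≠ 0 → (pgraph p).IsBridge s(u, p u) := by
    intro u hu
    rw [isBridge_iff]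
    rintro ⟨w⟩
    set Sset : Set (Fin N) := {x | ∃ k, p^[k] x = u} with hSset
    have hcl : ∀ ⦃a b : Fin N⦄, a ∈ Sset →
        ((pgraph p) \ SimpleGraph.fromEdgeSet {s(u, p u)}).Adj a b → b ∈ Sset := by
      intro a b ha hab
      rw [SimpleGraph.sdiff_adj, SimpleGraph.fromEdgeSet_adj] at hab
      obtain ⟨hab1, hab2⟩ := hab
      rw [pgraph_adj] at hab1
      obtain ⟨hne, hor⟩ := hab1
      rcases hor with ⟨rfl, ha0⟩ | ⟨rfl, hb0⟩
      · -- b = p a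
        obtain ⟨k, hk⟩ := ha
        have hau : a ≠ u := by
          rintro rfl
          exact hab2 ⟨rfl, hne⟩
        have hk0 : k ≠ 0 := by
          rintro rfl
          exact hau hk
        obtain ⟨j, rfl⟩ := Nat.exists_eq_succ_of_ne_zero hk0
        rw [Function.iterate_succ_apply] at hk
        exact ⟨j, hk⟩
      · -- a = p b
        obtain ⟨k, hk⟩ := ha
        exact ⟨k + 1, by rw [Function.iterate_succ_apply]; exact hk⟩
    have hpu : p u ∈ Sset := walk_mem_closed hcl w ⟨0, rfl⟩
    obtain ⟨k, hk⟩ := hpu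
    have h1 := pgraph_iter_le p hp hroot k (p u)
    rw [hk] at h1
    have := hp u hu
    omega
  intro u v hadj
  rw [pgraph_adj] at hadj
  rcases hadj.2 with ⟨rfl, h0⟩ | ⟨rfl, h0⟩
  · exact key u h0
  · rw [Sym2.eq_swap]
    exact key v h0

end ParentTree

lemma ncard_components_bot (W : Type*) :
    Nat.card (⊥ : SimpleGraph W).ConnectedComponent = Nat.card W := by
  refine (Nat.card_eq_of_bijective ((⊥ : SimpleGraph W).connectedComponentMk)
    ⟨?_, Quot.mk_surjective⟩).symm
  intro a b h
  exact (SimpleGraph.reachable_bot).mp (SimpleGraph.ConnectedComponent.exact h)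

lemma ncard_val_mem {N : ℕ} (A : Finset ℕ) (hA : ∀ a ∈ A, a < N) :
    {w : Fin N | w.val ∈ A}.ncard = A.card := by
  have himg : Fin.val '' {w : Fin N | w.val ∈ A} = ↑A := by
    ext a
    constructor
    · rintro ⟨w, hw, rfl⟩; exact hw
    · intro ha; exact ⟨⟨a, hA a ha⟩, ha, rfl⟩
  calc {w : Fin N | w.val ∈ A}.ncard
      = (Fin.val '' {w : Fin N | w.val ∈ A}).ncard :=
        (Set.ncard_image_of_injective _ Fin.val_injective).symm
    _ = (↑A : Set ℕ).ncard := by rw [himg]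
    _ = A.card := Set.ncard_coe_finset A

lemma three_le_ncard {α : Type*} {S : Set α} (hS : S.Finite) {w1 w2 w3 : α}
    (h1 : w1 ∈ S) (h2 : w2 ∈ S) (h3 : w3 ∈ S)
    (d12 : w1 ≠ w2) (d13 : w1 ≠ w3) (d23 : w2 ≠ w3) : 3 ≤ S.ncard := by
  have hsub : ({w1, w2, w3} : Set α) ⊆ S := by
    intro x hx
    rcases hx with rfl | rfl | rfl <;> assumption
  have hc : ({w1, w2, w3} : Set α).ncard = 3 := by
    rw [Set.ncard_insert_of_notMem (by simp [d12, d13]),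
      Set.ncard_insert_of_notMem (by simp [d23]), Set.ncard_singleton]
  rw [← hc]
  exact Set.ncard_le_ncard hsub hS

set_option maxHeartbeats 1600000 in
theorem part2 (n : ℕ) (hn : 6 ≤ n) :
    ∃ (V : Type) (_ : Fintype V) (G : SimpleGraph V),
      G.IsTree ∧ (∀ v : V, degC G v = 1 ∨ 3 ≤ degC G v) ∧
      {v : V | degC G v = 1}.ncard = n ∧
      Nat.card ((G.induce {v : V | IsHidden G v}).ConnectedComponent) = (n - 3) / 3 := by
  classical
  obtain ⟨b, r, hb, hr, hnb, hdiv⟩ :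
      ∃ b r : ℕ, 1 ≤ b ∧ r < 3 ∧ n = 3*b + 3 + r ∧ (n - 3) / 3 = b :=
    ⟨(n - 3) / 3, (n - 3) % 3, by omega, by omega, by omega, rfl⟩
  set N : ℕ := 6*b + 4 + r with hN
  set pf : ℕ → ℕ := fun a =>
    if a = 0 then 0
    else if a ≤ 3*b then (if a % 3 = 2 then a - 1 else a - 2)
    else if a ≤ 6*b then (if (a - 3*b) % 3 = 0 then a - 3*b else a - 3*b + 1)
    else if a = 6*b+1 then 3*b - 1
    else 0 with hpf
  have hpf_le3b : ∀ a, pf a ≤ 3*b := by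
    intro a; simp only [hpf]; split_ifs <;> (try contradiction) <;> omega
  have hpf_lt : ∀ a, a ≠ 0 → pf a < a := by
    intro a ha; simp only [hpf]; split_ifs <;> (try contradiction) <;> omega
  have hpf0 : pf 0 = 0 := by simp [hpf]
  set p : Fin N → Fin N :=
    fun v => ⟨pf v.val, lt_of_le_of_lt (hpf_le3b v.val) (by omega)⟩ with hpdef
  have hp : ∀ v : Fin N, v.val ≠ 0 → (p v).val < v.val := fun v hv => hpf_lt v.val hv
  have hroot : ∀ v : Fin N, v.val = 0 → p v = v := by
    intro v hv
    apply Fin.ext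
    show pf v.val = v.val
    rw [hv, hpf0]
  set G : SimpleGraph (Fin N) := pgraph p with hG
  have htree : G.IsTree := ⟨pgraph_connected p hp (by omega), pgraph_acyclic p hp hroot⟩
  have hpval : ∀ w : Fin N, (p w).val = pf w.val := fun w => rfl
  -- adjacency helpers
  have hadjP : ∀ v : Fin N, v.val ≠ 0 → G.Adj v (p v) := fun v hv => pgraph_adj_parent p hp hv
  have hadjC : ∀ v w : Fin N, w.val ≠ 0 → pf w.val = v.val → G.Adj v w := by
    intro v w hw0 hpfw
    rw [hG, pgraph_adj]
    refine ⟨?_, Or.inr ⟨Fin.ext hpfw.symm, hw0⟩⟩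
    intro he
    have h1 := hpf_lt w.val hw0
    rw [he] at hpfw
    omega
  have hadj_cases : ∀ v w : Fin N, G.Adj v w →
      (w.val = pf v.val ∧ v.val ≠ 0) ∨ (v.val = pf w.val ∧ w.val ≠ 0) := by
    intro v w h
    rw [hG, pgraph_adj] at h
    rcases h.2 with ⟨h1, h2⟩ | ⟨h1, h2⟩
    · exact Or.inl ⟨congrArg Fin.val h1, h2⟩
    · exact Or.inr ⟨congrArg Fin.val h1, h2⟩
  have hadjC' : ∀ (v : Fin N) (a : ℕ) (ha : a < N), a ≠ 0 → pf a = v.val →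
      G.Adj v ⟨a, ha⟩ :=
    fun v a ha h1 h2 => hadjC v ⟨a, ha⟩ h1 h2
  have hdeg3 : ∀ (v : Fin N) (a1 a2 a3 : ℕ) (h1 : a1 < N) (h2 : a2 < N) (h3 : a3 < N),
      G.Adj v ⟨a1, h1⟩ → G.Adj v ⟨a2, h2⟩ → G.Adj v ⟨a3, h3⟩ →
      a1 ≠ a2 → a1 ≠ a3 → a2 ≠ a3 → 3 ≤ degC G v := by
    intro v a1 a2 a3 h1 h2 h3 ha1 ha2 ha3 d12 d13 d23
    rw [degC]
    exact three_le_ncard (Set.toFinite _) ha1 ha2 ha3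
      (fun h => d12 (congrArg Fin.val h)) (fun h => d13 (congrArg Fin.val h))
      (fun h => d23 (congrArg Fin.val h))
  -- leaves: vertices with val ≥ 3b+1
  have hnb_leaf : ∀ v : Fin N, 3*b+1 ≤ v.val → {w | G.Adj v w} = {p v} := by
    intro v hv
    ext w
    simp only [Set.mem_setOf_eq, Set.mem_singleton_iff]
    constructor
    · intro h
      rcases hadj_cases v w h with ⟨h1, h2⟩ | ⟨h1, h2⟩
      · exact Fin.ext (by rw [h1, hpval])
      · have := hpf_le3b w.val
        omega
    · rintro rfl
      exact hadjP v (by omega)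
  have hdeg_leaf : ∀ v : Fin N, 3*b+1 ≤ v.val → degC G v = 1 := by
    intro v hv
    rw [degC, hnb_leaf v hv, Set.ncard_singleton]
  -- internal vertices have degree ≥ 3
  have hdeg_int : ∀ v : Fin N, v.val ≤ 3*b → 3 ≤ degC G v := by
    intro v hv
    have hpfv := hpf_le3b v.val
    by_cases h0 : v.val = 0
    · refine hdeg3 v 1 (6*b+2) (6*b+3) (by omega) (by omega) (by omega) ?_ ?_ ?_
        (by omega) (by omega) (by omega)
      · exact hadjC' v 1 (by omega) (by omega)
          (by rw [h0]; simp only [hpf]; split_ifs <;> (try contradiction) <;> omega)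
      · exact hadjC' v (6*b+2) (by omega) (by omega)
          (by rw [h0]; simp only [hpf]; split_ifs <;> (try contradiction) <;> omega)
      · exact hadjC' v (6*b+3) (by omega) (by omega)
          (by rw [h0]; simp only [hpf]; split_ifs <;> (try contradiction) <;> omega)
    · have hv1 : 1 ≤ v.val := by omega
      have hplt := hpf_lt v.val h0
      have hppar : G.Adj v ⟨pf v.val, by omega⟩ := hadjP v h0
      have hm3 : v.val % 3 = 0 ∨ v.val % 3 = 1 ∨ v.val % 3 = 2 := by omega
      rcases hm3 with hm | hm | hm
      · -- z vertex: v ≡ 0 mod 3, v ≥ 3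
        have h3v : 3 ≤ v.val := by omega
        refine hdeg3 v (pf v.val) (3*b + v.val - 1) (3*b + v.val)
          (by omega) (by omega) (by omega) hppar ?_ ?_ (by omega) (by omega) (by omega)
        · exact hadjC' v (3*b + v.val - 1) (by omega) (by omega)
            (by simp only [hpf]; split_ifs <;> (try contradiction) <;> omega)
        · exact hadjC' v (3*b + v.val) (by omega) (by omega)
            (by simp only [hpf]; split_ifs <;> (try contradiction) <;> omega)
      · -- h vertex: v ≡ 1 mod 3
        have hvle : v.val ≤ 3*b - 2 := by omega
        refine hdeg3 v (pf v.val) (v.val + 1) (v.val + 2)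
          (by omega) (by omega) (by omega) hppar ?_ ?_ (by omega) (by omega) (by omega)
        · exact hadjC' v (v.val + 1) (by omega) (by omega)
            (by simp only [hpf]; split_ifs <;> (try contradiction) <;> omega)
        · exact hadjC' v (v.val + 2) (by omega) (by omega)
            (by simp only [hpf]; split_ifs <;> (try contradiction) <;> omega)
      · -- y vertex: v ≡ 2 mod 3
        have hvle : v.val ≤ 3*b - 1 := by omega
        by_cases hyb : v.val = 3*b - 1
        · refine hdeg3 v (pf v.val) (3*b + v.val - 1) (6*b+1)
            (by omega) (by omega) (by omega) hppar ?_ ?_ (by omega) (by omega) (by omega)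
          · exact hadjC' v (3*b + v.val - 1) (by omega) (by omega)
              (by simp only [hpf]; split_ifs <;> (try contradiction) <;> omega)
          · exact hadjC' v (6*b+1) (by omega) (by omega)
              (by simp only [hpf]; split_ifs <;> (try contradiction) <;> omega)
        · have hvle2 : v.val ≤ 3*b - 4 := by omega
          refine hdeg3 v (pf v.val) (3*b + v.val - 1) (v.val + 2)
            (by omega) (by omega) (by omega) hppar ?_ ?_ (by omega) (by omega) (by omega)
          · exact hadjC' v (3*b + v.val - 1) (by omega) (by omega)
              (by simp only [hpf]; split_ifs <;> (try contradiction) <;> omega)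
          · exact hadjC' v (v.val + 2) (by omega) (by omega)
              (by simp only [hpf]; split_ifs <;> (try contradiction) <;> omega)
  have hdeg : ∀ v : Fin N, degC G v = 1 ∨ 3 ≤ degC G v := by
    intro v
    by_cases h : v.val ≤ 3*b
    · exact Or.inr (hdeg_int v h)
    · exact Or.inl (hdeg_leaf v (by omega))
  -- leaf count
  have hleafset : {v : Fin N | degC G v = 1} = {v : Fin N | v.val ∈ Finset.Ico (3*b+1) N} := by
    ext v
    simp only [Set.mem_setOf_eq, Finset.mem_Ico]
    constructor
    · intro h
      refine ⟨?_, v.isLt⟩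
      by_contra hc
      have := hdeg_int v (by omega)
      omega
    · intro h
      exact hdeg_leaf v h.1
  have hleafcount : {v : Fin N | degC G v = 1}.ncard = n := by
    rw [hleafset, ncard_val_mem _ (fun a ha => (Finset.mem_Ico.mp ha).2), Nat.card_Ico]
    omega
  -- hidden characterization
  have hpf_notmod1 : ∀ a, (3*b+1 ≤ a ∨ (a ≤ 3*b ∧ a % 3 = 1)) →
      pf a % 3 ≠ 1 ∨ pf a = 0 := by
    intro a ha
    simp only [hpf]
    split_ifs <;> (try contradiction) <;> omega
  have hhid : ∀ v : Fin N, IsHidden G v ↔ (1 ≤ v.val ∧ v.val ≤ 3*b ∧ v.val % 3 = 1) := by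
    intro v
    constructor
    · rintro ⟨hd1, hd2⟩
      have hle : v.val ≤ 3*b := by
        by_contra hc
        exact hd1 (hdeg_leaf v (by omega))
      have h0 : v.val ≠ 0 := by
        rintro h0
        refine hd2 ⟨6*b+2, by omega⟩ ?_ (hdeg_leaf _ (by show 3*b+1 ≤ 6*b+2; omega))
        exact hadjC' v (6*b+2) (by omega) (by omega)
          (by simp only [hpf]; split_ifs <;> (try contradiction) <;> omega)
      have hm2 : v.val % 3 ≠ 2 := by
        intro hm
        have hv2 : 2 ≤ v.val := by omega
        refine hd2 ⟨3*b + v.val - 1, by omega⟩ ?_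
          (hdeg_leaf _ (by show 3*b+1 ≤ 3*b + v.val - 1; omega))
        exact hadjC' v (3*b + v.val - 1) (by omega) (by omega)
          (by simp only [hpf]; split_ifs <;> (try contradiction) <;> omega)
      have hm0 : v.val % 3 ≠ 0 := by
        intro hm
        have hv3 : 3 ≤ v.val := by omega
        refine hd2 ⟨3*b + v.val, by omega⟩ ?_
          (hdeg_leaf _ (by show 3*b+1 ≤ 3*b + v.val; omega))
        exact hadjC' v (3*b + v.val) (by omega) (by omega)
          (by simp only [hpf]; split_ifs <;> (try contradiction) <;> omega)
      omega
    · rintro ⟨h1, h2, h3⟩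
      constructor
      · have := hdeg_int v h2
        omega
      · intro w hw
        rcases hadj_cases v w hw with ⟨hw1, hw2⟩ | ⟨hw1, hw2⟩
        · have := hpf_le3b v.val
          have := hdeg_int w (by omega)
          omega
        · by_cases hwle : w.val ≤ 3*b
          · have := hdeg_int w hwle
            omega
          · rcases hpf_notmod1 w.val (Or.inl (by omega)) with h | h <;> omega
  -- hidden vertices are pairwise non-adjacent
  have hbot : G.induce {v : Fin N | IsHidden G v} = ⊥ := by
    ext ⟨u, hu⟩ ⟨w, hw⟩
    simp only [SimpleGraph.bot_adj, iff_false]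
    intro hadj
    have hadj' : G.Adj u w := hadj
    rw [Set.mem_setOf_eq, hhid] at hu hw
    rcases hadj_cases u w hadj' with ⟨h1, h2⟩ | ⟨h1, h2⟩
    · rcases hpf_notmod1 u.val (Or.inr ⟨hu.2.1, hu.2.2⟩) with h | h <;> omega
    · rcases hpf_notmod1 w.val (Or.inr ⟨hw.2.1, hw.2.2⟩) with h | h <;> omega
  -- number of hidden components
  have hBcard : ((Finset.Ico 1 (3*b+1)).filter (fun a => a % 3 = 1)).card = b := by
    have himg : (Finset.Ico 1 (3*b+1)).filter (fun a => a % 3 = 1)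
        = Finset.image (fun i => 3*i+1) (Finset.range b) := by
      ext a
      simp only [Finset.mem_filter, Finset.mem_Ico, Finset.mem_image, Finset.mem_range]
      constructor
      · rintro ⟨⟨ha1, ha2⟩, ha3⟩
        exact ⟨a / 3, by omega, by omega⟩
      · rintro ⟨i, hi, rfl⟩
        omega
    rw [himg, Finset.card_image_of_injective _ (fun x y h => by omega), Finset.card_range]
  have hcomp : Nat.card ((G.induce {v : Fin N | IsHidden G v}).ConnectedComponent)
      = (n - 3) / 3 := by
    rw [hbot, ncard_components_bot, Nat.card_coe_set_eq]
    have hSeq : {v : Fin N | IsHidden G v}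
        = {v : Fin N | v.val ∈ (Finset.Ico 1 (3*b+1)).filter (fun a => a % 3 = 1)} := by
      ext v
      rw [Set.mem_setOf_eq, hhid]
      simp only [Set.mem_setOf_eq, Finset.mem_filter, Finset.mem_Ico]
      omega
    rw [hSeq, ncard_val_mem _ (fun a ha => by
      have := (Finset.mem_Ico.mp (Finset.mem_filter.mp ha).1).2
      omega), hBcard, hdiv]
  exact ⟨Fin N, inferInstance, G, htree, hdeg, hleafcount, hcomp⟩
theorem hidden_components_sharp_bound :
    (∀ (V : Type) (_ : Fintype V) (G : SimpleGraph V), G.IsTree →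
      (∀ v : V, degC G v = 1 ∨ 3 ≤ degC G v) →
      ∀ n : ℕ, 3 ≤ n → {v : V | degC G v = 1}.ncard = n →
      ((Nat.card ((G.induce {v : V | IsHidden G v}).ConnectedComponent) : ℝ))
        ≤ ((n : ℝ) - 3) / 3) ∧
    (∀ n : ℕ, 6 ≤ n → ∃ (V : Type) (_ : Fintype V) (G : SimpleGraph V),
      G.IsTree ∧ (∀ v : V, degC G v = 1 ∨ 3 ≤ degC G v) ∧
      {v : V | degC G v = 1}.ncard = n ∧
      Nat.card ((G.induce {v : V | IsHidden G v}).ConnectedComponent) = (n - 3) / 3) := by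
  constructor
  · intro V fV G hT hdeg n hn hleaf
    haveI := fV
    have h := part1 G hT hdeg n hn hleaf
    rw [le_div_iff₀ (by norm_num : (0:ℝ) < 3)]
    have h2 : ((3 * Nat.card ((G.induce {v : V | IsHidden G v}).ConnectedComponent) + 3 : ℕ) : ℝ)
        ≤ (n : ℝ) := by exact_mod_cast h
    push_cast at h2
    linarith
  · exact part2
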